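/- Let K be a field of characteristic zero and n ≥ 1. Let T ∈ K[z], let A be an n×n matrix over K[z], and let f_1, …, f_n ∈ K⟦z⟧ be formal power series such that T·f_i' = ∑_j A_{ij}·f_j for all i (formal derivative, polynomials regarded as power series). Let Q ∈ K[z], let P_1, …, P_n ∈ K[z], and let N, M be natural numbers such that for every i, z^{N+M} divides Q·f_i − P_i in K⟦z⟧. Define vectors of polynomials R_m = (R_{m,1},…,R_{m,n}) by R_{0,i} = P_i and R_{m+1,i} = T·(R_{m,i})' − ∑_j A_{ij}·R_{m,j} − m·T'·R_{m,i}. Then for every m ≤ N+M and every i, z^{N+M−m} divides T^m·Q^{(m)}·f_i − R_{m,i} in K⟦z⟧, where Q^{(m)} is the m-th derivative of Q. -/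

import Mathlib

open Polynomial PowerSeries Finset

noncomputable section

private lemma derivFun_sub {K : Type*} [CommRing K] (a b : PowerSeries K) :
    PowerSeries.derivativeFun (a - b)
      = PowerSeries.derivativeFun a - PowerSeries.derivativeFun b := by
  exact (PowerSeries.derivative K).map_sub a b

private lemma derivFun_coe {K : Type*} [CommRing K] (p : Polynomial K) :
    PowerSeries.derivativeFun (p : PowerSeries K) = ((Polynomial.derivative p : Polynomial K) : PowerSeries K) :=
  PowerSeries.derivative_coe p

private lemma dvd_derivFun {K : Type*} [CommRing K] {k : ℕ} {g : PowerSeries K}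
    (h : (PowerSeries.X : PowerSeries K) ^ (k + 1) ∣ g) :
    (PowerSeries.X : PowerSeries K) ^ k ∣ PowerSeries.derivativeFun g := by
  rw [PowerSeries.X_pow_dvd_iff] at h ⊢
  intro m hm
  rw [show g.derivativeFun = PowerSeries.derivative K g from rfl, PowerSeries.coeff_derivativeFun, h (m + 1) (by omega), zero_mul]

/-- Step 1 of the proof of the large-sense Chudnovsky theorem: differentiating a
Padé-type approximation `Q·f − P = O(z^{N+M})` of a solution of the system
`T·y' = A·y` loses one order of vanishing per derivative:
`z^{N+M−m} ∣ T^m Q^{(m)} f_i − R_{m,i}` where `R_m = T^m (D−G)^m P`. -/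
theorem pade_iterated_congruence
    (K : Type*) [Field K] [CharZero K]
    (n : ℕ) (hn : 1 ≤ n)
    (T : Polynomial K) (A : Matrix (Fin n) (Fin n) (Polynomial K))
    (f : Fin n → PowerSeries K)
    (hsys : ∀ i, (T : PowerSeries K) * PowerSeries.derivativeFun (f i)
        = ∑ j, (A i j : PowerSeries K) * f j)
    (Q : Polynomial K) (P : Fin n → Polynomial K) (N M : ℕ)
    (hpade : ∀ i, (PowerSeries.X : PowerSeries K) ^ (N + M)
        ∣ (Q : PowerSeries K) * f i - (P i : PowerSeries K))
    (R : ℕ → Fin n → Polynomial K)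
    (hR0 : ∀ i, R 0 i = P i)
    (hRrec : ∀ m i, R (m + 1) i
        = T * Polynomial.derivative (R m i) - (∑ j, A i j * R m j)
          - (m : Polynomial K) * (Polynomial.derivative T * R m i)) :
    ∀ m ≤ N + M, ∀ i, (PowerSeries.X : PowerSeries K) ^ (N + M - m)
      ∣ ((T ^ m * Polynomial.derivative^[m] Q : Polynomial K) : PowerSeries K) * f i
        - (R m i : PowerSeries K) := by
  intro m hm
  induction m with
  | zero =>
      intro i
      simpa [hR0] using hpade i
  | succ m ih =>
      intro i
      have hm' : m ≤ N + M := by omega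
      have key := ih hm'
      set S : Fin n → PowerSeries K := fun j =>
        ((T ^ m * Polynomial.derivative^[m] Q : Polynomial K) : PowerSeries K) * f j
          - (R m j : PowerSeries K) with hS
      have hsum : ((∑ j, A i j * R m j : Polynomial K) : PowerSeries K)
          = ∑ j, ((A i j : Polynomial K) : PowerSeries K) * ((R m j : Polynomial K) : PowerSeries K) := by
        rw [← Polynomial.coeToPowerSeries.ringHom_apply, map_sum]
        simp [Polynomial.coeToPowerSeries.ringHom_apply]
      have hDS : PowerSeries.derivativeFun (S i)
          = ((T ^ m * Polynomial.derivative^[m] Q : Polynomial K) : PowerSeries K)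
              * PowerSeries.derivativeFun (f i)
            + f i * ((Polynomial.derivative (T ^ m * Polynomial.derivative^[m] Q) : Polynomial K) : PowerSeries K)
            - ((Polynomial.derivative (R m i) : Polynomial K) : PowerSeries K) := by
        rw [hS]
        rw [derivFun_sub, PowerSeries.derivativeFun_mul, derivFun_coe,
          derivFun_coe, smul_eq_mul, smul_eq_mul]
      have hTm : ((m : Polynomial K) : PowerSeries K) * (T : PowerSeries K) ^ (m - 1) * (T : PowerSeries K)
          = ((m : Polynomial K) : PowerSeries K) * (T : PowerSeries K) ^ m := by
        cases m with
        | zero => simp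
        | succ k => rw [Nat.add_sub_cancel]; ring
      have hsum2 : (∑ j, (A i j : PowerSeries K) * S j)
          = ((T ^ m * Polynomial.derivative^[m] Q : Polynomial K) : PowerSeries K)
              * (∑ j, (A i j : PowerSeries K) * f j)
            - ∑ j, ((A i j : Polynomial K) : PowerSeries K) * ((R m j : Polynomial K) : PowerSeries K) := by
        rw [Finset.mul_sum, ← Finset.sum_sub_distrib]
        refine Finset.sum_congr rfl fun j _ => ?_
        simp only [hS]
        ring
      have hkey : ((T ^ (m+1) * Polynomial.derivative^[m+1] Q : Polynomial K) : PowerSeries K) * f i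
          - (R (m+1) i : PowerSeries K)
          = (T : PowerSeries K) * PowerSeries.derivativeFun (S i)
            - (∑ j, (A i j : PowerSeries K) * S j)
            - ((m : Polynomial K) : PowerSeries K)
              * ((Polynomial.derivative T : Polynomial K) : PowerSeries K) * S i := by
        rw [hRrec, hDS, hsum2]
        simp only [hS, Function.iterate_succ_apply', Polynomial.derivative_mul,
          Polynomial.derivative_pow, Polynomial.coe_mul, Polynomial.coe_sub,
          Polynomial.coe_add, Polynomial.coe_pow, Polynomial.C_eq_natCast, hsum]
        linear_combination
          (-((T : PowerSeries K) ^ m * ((Polynomial.derivative^[m] Q : Polynomial K) : PowerSeries K))) * hsys i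
          - (((Polynomial.derivative^[m] Q : Polynomial K) : PowerSeries K) * f i
              * ((Polynomial.derivative T : Polynomial K) : PowerSeries K)) * hTm
      rw [hkey]
      have hle : N + M - (m + 1) + 1 = N + M - m := by omega
      refine dvd_sub (dvd_sub ?_ ?_) ?_
      · exact Dvd.dvd.mul_left (dvd_derivFun (by rw [hle]; exact key i)) _
      · exact Finset.dvd_sum fun j _ => Dvd.dvd.mul_left
          ((pow_dvd_pow _ (by omega)).trans (key j)) _
      · exact Dvd.dvd.mul_left ((pow_dvd_pow _ (by omega)).trans (key i)) _
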